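/- Let r ≥ 2. Then for all j, k ∈ {1, …, r}: E[(((r²−1)/4)·ρ(j) + ρ(j)³)² · ρ(j)²] ≤ 0.00234 r⁸, and E[(((r²−1)/4)·ρ(j) + ρ(j)³)² · ρ(k)²] ≤ 0.00240 r⁸. -/

import Mathlib

open MeasureTheory Finset Real

noncomputable section

instance instMSPerm (r : ℕ) : MeasurableSpace (Equiv.Perm (Fin r)) := ⊤

/-- The law of a single uniformly random permutation of `{1, …, r}`. -/
def permMeasure (r : ℕ) : Measure (Equiv.Perm (Fin r)) :=
  (PMF.uniformOfFintype (Equiv.Perm (Fin r))).toMeasure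

/-- `ρ(j) = π(j) - (r+1)/2`, where `π(j) ∈ {1, …, r}` (a permutation of `Fin r` assigns
values in `{0, …, r-1}`, hence the `+ 1`). -/
def rho1 (r : ℕ) (j : Fin r) (g : Equiv.Perm (Fin r)) : ℝ :=
  ((g j : ℕ) : ℝ) + 1 - ((r : ℝ) + 1) / 2

end

instance GR_msc (r : ℕ) : MeasurableSingletonClass (Equiv.Perm (Fin r)) :=
  ⟨fun _ => MeasurableSpace.measurableSet_top⟩

lemma GR_integral (r : ℕ) (f : Equiv.Perm (Fin r) → ℝ) :
    ∫ p, f p ∂(permMeasure r) = (r.factorial : ℝ)⁻¹ * ∑ g : Equiv.Perm (Fin r), f g := by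
  simp only [permMeasure]
  rw [PMF.integral_eq_sum]
  simp [PMF.uniformOfFintype_apply, Fintype.card_perm, Fintype.card_fin,
    ENNReal.toReal_inv, Finset.mul_sum]

lemma GR_sum_poly (a0 a1 a2 a3 a4 a5 a6 a7 a8 : ℝ) (n : ℕ) :
    ∑ i ∈ Finset.range n, (a0 + a1*(i:ℝ) + a2*(i:ℝ)^2 + a3*(i:ℝ)^3 + a4*(i:ℝ)^4
        + a5*(i:ℝ)^5 + a6*(i:ℝ)^6 + a7*(i:ℝ)^7 + a8*(i:ℝ)^8)
      = a0*(n:ℝ)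
      + a1*((n:ℝ)^2/2 - (n:ℝ)/2)
      + a2*((n:ℝ)^3/3 - (n:ℝ)^2/2 + (n:ℝ)/6)
      + a3*((n:ℝ)^4/4 - (n:ℝ)^3/2 + (n:ℝ)^2/4)
      + a4*((n:ℝ)^5/5 - (n:ℝ)^4/2 + (n:ℝ)^3/3 - (n:ℝ)/30)
      + a5*((n:ℝ)^6/6 - (n:ℝ)^5/2 + 5*(n:ℝ)^4/12 - (n:ℝ)^2/12)
      + a6*((n:ℝ)^7/7 - (n:ℝ)^6/2 + (n:ℝ)^5/2 - (n:ℝ)^3/6 + (n:ℝ)/42)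
      + a7*((n:ℝ)^8/8 - (n:ℝ)^7/2 + 7*(n:ℝ)^6/12 - 7*(n:ℝ)^4/24 + (n:ℝ)^2/12)
      + a8*((n:ℝ)^9/9 - (n:ℝ)^8/2 + 2*(n:ℝ)^7/3 - 7*(n:ℝ)^5/15 + 2*(n:ℝ)^3/9 - (n:ℝ)/30) := by
  induction n with
  | zero => simp
  | succ n ih =>
    rw [Finset.sum_range_succ, ih]
    push_cast
    ring

lemma GR_L1 (r : ℕ) :
    ∑ i ∈ Finset.range r, ((((r:ℝ)^2-1)/4 * ((i:ℝ)+1-((r:ℝ)+1)/2)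
        + ((i:ℝ)+1-((r:ℝ)+1)/2)^3)^2 * ((i:ℝ)+1-((r:ℝ)+1)/2)^2)
      = (47/20160)*(r:ℝ)^9 - (41/2240)*(r:ℝ)^7 + (19/320)*(r:ℝ)^5
        - (1811/20160)*(r:ℝ)^3 + (13/280)*(r:ℝ) := by
  have h : ∀ i ∈ Finset.range r,
      ((((r:ℝ)^2-1)/4 * ((i:ℝ)+1-((r:ℝ)+1)/2)
        + ((i:ℝ)+1-((r:ℝ)+1)/2)^3)^2 * ((i:ℝ)+1-((r:ℝ)+1)/2)^2)
      = ((1/64 : ℝ)*(r:ℝ)^8 + (-3/32 : ℝ)*(r:ℝ)^7 + (15/64 : ℝ)*(r:ℝ)^6 + (-5/16 : ℝ)*(r:ℝ)^5 + (15/64 : ℝ)*(r:ℝ)^4 + (-3/32 : ℝ)*(r:ℝ)^3 + (1/64 : ℝ)*(r:ℝ)^2)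
      + ((-3/16 : ℝ)*(r:ℝ)^7 + (1 : ℝ)*(r:ℝ)^6 + (-35/16 : ℝ)*(r:ℝ)^5 + (5/2 : ℝ)*(r:ℝ)^4 + (-25/16 : ℝ)*(r:ℝ)^3 + (1/2 : ℝ)*(r:ℝ)^2 + (-1/16 : ℝ)*(r:ℝ))*(i:ℝ)
      + ((1 : ℝ)*(r:ℝ)^6 + (-75/16 : ℝ)*(r:ℝ)^5 + (141/16 : ℝ)*(r:ℝ)^4 + (-67/8 : ℝ)*(r:ℝ)^3 + (33/8 : ℝ)*(r:ℝ)^2 + (-15/16 : ℝ)*(r:ℝ) + (1/16 : ℝ))*(i:ℝ)^2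
      + ((-25/8 : ℝ)*(r:ℝ)^5 + (101/8 : ℝ)*(r:ℝ)^4 + (-79/4 : ℝ)*(r:ℝ)^3 + (59/4 : ℝ)*(r:ℝ)^2 + (-41/8 : ℝ)*(r:ℝ) + (5/8 : ℝ))*(i:ℝ)^3
      + ((101/16 : ℝ)*(r:ℝ)^4 + (-85/4 : ℝ)*(r:ℝ)^3 + (209/8 : ℝ)*(r:ℝ)^2 + (-55/4 : ℝ)*(r:ℝ) + (41/16 : ℝ))*(i:ℝ)^4
      + ((-17/2 : ℝ)*(r:ℝ)^3 + (45/2 : ℝ)*(r:ℝ)^2 + (-39/2 : ℝ)*(r:ℝ) + (11/2 : ℝ))*(i:ℝ)^5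
      + ((15/2 : ℝ)*(r:ℝ)^2 + (-14 : ℝ)*(r:ℝ) + (13/2 : ℝ))*(i:ℝ)^6
      + ((-4 : ℝ)*(r:ℝ) + (4 : ℝ))*(i:ℝ)^7
      + (1 : ℝ)*(i:ℝ)^8 := by
    intro i _
    ring
  rw [Finset.sum_congr rfl h, GR_sum_poly]
  ring

lemma GR_L2 (r : ℕ) :
    ∑ i ∈ Finset.range r, ((((r:ℝ)^2-1)/4 * ((i:ℝ)+1-((r:ℝ)+1)/2)
        + ((i:ℝ)+1-((r:ℝ)+1)/2)^3)^2)
      = (23/1680)*(r:ℝ)^7 - (7/120)*(r:ℝ)^5 + (7/80)*(r:ℝ)^3 - (3/70)*(r:ℝ) := by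
  have h : ∀ i ∈ Finset.range r,
      ((((r:ℝ)^2-1)/4 * ((i:ℝ)+1-((r:ℝ)+1)/2)
        + ((i:ℝ)+1-((r:ℝ)+1)/2)^3)^2)
      = ((1/16 : ℝ)*(r:ℝ)^6 + (-1/4 : ℝ)*(r:ℝ)^5 + (3/8 : ℝ)*(r:ℝ)^4 + (-1/4 : ℝ)*(r:ℝ)^3 + (1/16 : ℝ)*(r:ℝ)^2)
      + ((-1/2 : ℝ)*(r:ℝ)^5 + (7/4 : ℝ)*(r:ℝ)^4 + (-9/4 : ℝ)*(r:ℝ)^3 + (5/4 : ℝ)*(r:ℝ)^2 + (-1/4 : ℝ)*(r:ℝ))*(i:ℝ)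
      + ((7/4 : ℝ)*(r:ℝ)^4 + (-21/4 : ℝ)*(r:ℝ)^3 + (11/2 : ℝ)*(r:ℝ)^2 + (-9/4 : ℝ)*(r:ℝ) + (1/4 : ℝ))*(i:ℝ)^2
      + ((-7/2 : ℝ)*(r:ℝ)^3 + (17/2 : ℝ)*(r:ℝ)^2 + (-13/2 : ℝ)*(r:ℝ) + (3/2 : ℝ))*(i:ℝ)^3
      + ((17/4 : ℝ)*(r:ℝ)^2 + (-15/2 : ℝ)*(r:ℝ) + (13/4 : ℝ))*(i:ℝ)^4
      + ((-3 : ℝ)*(r:ℝ) + (3 : ℝ))*(i:ℝ)^5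
      + (1 : ℝ)*(i:ℝ)^6
      + (0 : ℝ)*(i:ℝ)^7
      + (0 : ℝ)*(i:ℝ)^8 := by
    intro i _
    ring
  rw [Finset.sum_congr rfl h, GR_sum_poly]
  ring

lemma GR_L3 (r : ℕ) :
    ∑ i ∈ Finset.range r, (((i:ℝ)+1-((r:ℝ)+1)/2)^2)
      = (1/12)*(r:ℝ)^3 - (1/12)*(r:ℝ) := by
  have h : ∀ i ∈ Finset.range r,
      (((i:ℝ)+1-((r:ℝ)+1)/2)^2)
      = ((1/4 : ℝ)*(r:ℝ)^2 + (-1/2 : ℝ)*(r:ℝ) + (1/4 : ℝ))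
      + ((-1 : ℝ)*(r:ℝ) + (1 : ℝ))*(i:ℝ)
      + (1 : ℝ)*(i:ℝ)^2
      + (0 : ℝ)*(i:ℝ)^3 + (0 : ℝ)*(i:ℝ)^4 + (0 : ℝ)*(i:ℝ)^5
      + (0 : ℝ)*(i:ℝ)^6 + (0 : ℝ)*(i:ℝ)^7 + (0 : ℝ)*(i:ℝ)^8 := by
    intro i _
    ring
  rw [Finset.sum_congr rfl h, GR_sum_poly]
  ring

lemma GR_exists_perm {r : ℕ} {v w v' w' : Fin r} (hvw : v ≠ w) (h' : v' ≠ w') :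
    ∃ σ : Equiv.Perm (Fin r), σ v = v' ∧ σ w = w' := by
  have h1 : Equiv.swap v v' w ≠ v' := by
    intro h
    have h2 : Equiv.swap v v' w = Equiv.swap v v' v := by
      rw [h, Equiv.swap_apply_left]
    exact hvw ((Equiv.swap v v').injective h2).symm
  refine ⟨Equiv.swap (Equiv.swap v v' w) w' * Equiv.swap v v', ?_, ?_⟩
  · simp only [Equiv.Perm.mul_apply, Equiv.swap_apply_left]
    exact Equiv.swap_apply_of_ne_of_ne (Ne.symm h1) h'
  · simp only [Equiv.Perm.mul_apply]
    exact Equiv.swap_apply_left _ _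

lemma GR_fiber_card {r : ℕ} (j k : Fin r) (σ : Equiv.Perm (Fin r)) (v w : Fin r) :
    (Finset.univ.filter fun g : Equiv.Perm (Fin r) => g j = v ∧ g k = w).card
      = (Finset.univ.filter fun g : Equiv.Perm (Fin r) => g j = σ v ∧ g k = σ w).card := by
  apply Finset.card_nbij' (fun g => σ * g) (fun g => σ⁻¹ * g)
  · intro g hg
    simp only [Finset.mem_coe, Finset.mem_filter, Finset.mem_univ, true_and] at hg ⊢
    simp [Equiv.Perm.mul_apply, hg.1, hg.2]
  · intro g hg
    simp only [Finset.mem_coe, Finset.mem_filter, Finset.mem_univ, true_and] at hg ⊢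
    simp [Equiv.Perm.mul_apply, hg.1, hg.2]
  · intro g _
    simp [← mul_assoc]
  · intro g _
    simp [← mul_assoc]

lemma GR_fiber_single {r : ℕ} (j : Fin r) (σ : Equiv.Perm (Fin r)) (v : Fin r) :
    (Finset.univ.filter fun g : Equiv.Perm (Fin r) => g j = v).card
      = (Finset.univ.filter fun g : Equiv.Perm (Fin r) => g j = σ v).card := by
  apply Finset.card_nbij' (fun g => σ * g) (fun g => σ⁻¹ * g)
  · intro g hg
    simp only [Finset.mem_coe, Finset.mem_filter, Finset.mem_univ, true_and] at hg ⊢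
    simp [Equiv.Perm.mul_apply, hg]
  · intro g hg
    simp only [Finset.mem_coe, Finset.mem_filter, Finset.mem_univ, true_and] at hg ⊢
    simp [Equiv.Perm.mul_apply, hg]
  · intro g _
    simp [← mul_assoc]
  · intro g _
    simp [← mul_assoc]

lemma GR_sum_single {r : ℕ} (j : Fin r) (F : Fin r → ℝ) :
    (r:ℝ) * ∑ g : Equiv.Perm (Fin r), F (g j) = (r.factorial : ℝ) * ∑ v, F v := by
  classical
  set n := (Finset.univ.filter fun g : Equiv.Perm (Fin r) => g j = j).card with hn
  have hfib : ∀ v : Fin r,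
      (Finset.univ.filter fun g : Equiv.Perm (Fin r) => g j = v).card = n := by
    intro v
    have h := GR_fiber_single j (Equiv.swap j v) j
    rw [Equiv.swap_apply_left] at h
    exact h.symm
  have himg : (Finset.univ.image fun g : Equiv.Perm (Fin r) => g j) = Finset.univ := by
    apply Finset.eq_univ_of_forall
    intro v
    exact Finset.mem_image.mpr ⟨Equiv.swap j v, Finset.mem_univ _, Equiv.swap_apply_left _ _⟩
  have hsum : ∑ g : Equiv.Perm (Fin r), F (g j) = (n:ℝ) * ∑ v, F v := by
    rw [Finset.sum_comp (fun v => F v) (fun g : Equiv.Perm (Fin r) => g j), himg]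
    simp only [hfib, nsmul_eq_mul]
    rw [Finset.mul_sum]
  have hcard : r.factorial = r * n := by
    have h1 : (Finset.univ : Finset (Equiv.Perm (Fin r))).card
        = ∑ v : Fin r, (Finset.univ.filter fun g : Equiv.Perm (Fin r) => g j = v).card :=
      Finset.card_eq_sum_card_fiberwise (fun g _ => Finset.mem_univ (g j))
    simp only [hfib, Finset.sum_const, Finset.card_univ, Fintype.card_perm, Fintype.card_fin,
      smul_eq_mul] at h1
    exact h1
  rw [hsum, hcard]
  push_cast
  ring

lemma GR_sum_pair {r : ℕ} (j k : Fin r) (hjk : j ≠ k) (F : Fin r → Fin r → ℝ) :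
    ((r:ℝ) * (r:ℝ) - (r:ℝ)) * ∑ g : Equiv.Perm (Fin r), F (g j) (g k)
      = (r.factorial : ℝ) * ∑ p ∈ (Finset.univ : Finset (Fin r)).offDiag, F p.1 p.2 := by
  classical
  set n := (Finset.univ.filter fun g : Equiv.Perm (Fin r) => g j = j ∧ g k = k).card with hn
  have hfib : ∀ p ∈ (Finset.univ : Finset (Fin r)).offDiag,
      (Finset.univ.filter fun g : Equiv.Perm (Fin r) => (g j, g k) = p).card = n := by
    intro p hp
    obtain ⟨-, -, hne⟩ := Finset.mem_offDiag.mp hp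
    obtain ⟨σ, h1, h2⟩ := GR_exists_perm hjk hne
    have h := GR_fiber_card j k σ j k
    rw [h1, h2] at h
    have heq : (Finset.univ.filter fun g : Equiv.Perm (Fin r) => (g j, g k) = p)
        = Finset.univ.filter fun g : Equiv.Perm (Fin r) => g j = p.1 ∧ g k = p.2 :=
      Finset.filter_congr (fun g _ => by rw [Prod.ext_iff])
    rw [heq]
    exact h.symm
  have himg : (Finset.univ.image fun g : Equiv.Perm (Fin r) => (g j, g k))
      = (Finset.univ : Finset (Fin r)).offDiag := by
    ext p
    constructor
    · intro hp
      obtain ⟨g, -, hg⟩ := Finset.mem_image.mp hp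
      rw [← hg]
      exact Finset.mem_offDiag.mpr ⟨Finset.mem_univ _, Finset.mem_univ _, g.injective.ne hjk⟩
    · intro hp
      obtain ⟨-, -, hne⟩ := Finset.mem_offDiag.mp hp
      obtain ⟨σ, h1, h2⟩ := GR_exists_perm hjk hne
      exact Finset.mem_image.mpr ⟨σ, Finset.mem_univ _, by rw [h1, h2]⟩
  have hsum : ∑ g : Equiv.Perm (Fin r), F (g j) (g k)
      = (n:ℝ) * ∑ p ∈ (Finset.univ : Finset (Fin r)).offDiag, F p.1 p.2 := by
    rw [show (∑ g : Equiv.Perm (Fin r), F (g j) (g k))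
        = ∑ g : Equiv.Perm (Fin r), (fun p : Fin r × Fin r => F p.1 p.2) ((fun g : Equiv.Perm (Fin r) => (g j, g k)) g) from rfl]
    rw [Finset.sum_comp (fun p : Fin r × Fin r => F p.1 p.2)
      (fun g : Equiv.Perm (Fin r) => (g j, g k)), himg]
    rw [Finset.sum_congr rfl (fun p hp => by rw [hfib p hp])]
    simp only [nsmul_eq_mul]
    rw [Finset.mul_sum]
  have hcard : r.factorial = (r * r - r) * n := by
    have h1 : (Finset.univ : Finset (Equiv.Perm (Fin r))).card
        = ∑ p ∈ (Finset.univ : Finset (Fin r)).offDiag,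
            (Finset.univ.filter fun g : Equiv.Perm (Fin r) => (g j, g k) = p).card :=
      Finset.card_eq_sum_card_fiberwise (fun g _ =>
        Finset.mem_offDiag.mpr ⟨Finset.mem_univ _, Finset.mem_univ _, g.injective.ne hjk⟩)
    rw [Finset.sum_congr rfl hfib] at h1
    simp only [Finset.sum_const, smul_eq_mul, Finset.card_univ, Fintype.card_perm,
      Fintype.card_fin, Finset.offDiag_card] at h1
    simpa [Finset.card_univ, Fintype.card_fin] using h1
  have hrr : r ≤ r * r := Nat.le_mul_of_pos_left r (by
    rcases Nat.eq_zero_or_pos r with h | h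
    · subst h; simp at hjk ⊢; exact absurd (Subsingleton.elim j k) hjk
    · exact h)
  rw [hsum, hcard]
  push_cast [Nat.cast_sub hrr]
  ring

lemma GR_offDiag_split {r : ℕ} (F G : Fin r → ℝ) :
    ∑ p ∈ (Finset.univ : Finset (Fin r)).offDiag, F p.1 * G p.2
      = (∑ v, F v) * (∑ v, G v) - ∑ v, F v * G v := by
  classical
  have h := Finset.sum_union (f := fun p : Fin r × Fin r => F p.1 * G p.2)
    (Finset.disjoint_diag_offDiag (Finset.univ : Finset (Fin r)))
  rw [Finset.diag_union_offDiag, Finset.sum_product' Finset.univ Finset.univ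
    (fun v w => F v * G w), Finset.sum_diag] at h
  rw [← Finset.sum_mul_sum Finset.univ Finset.univ F G] at h
  linarith

/-- **Lemma 3.5 (Gaunt–Reinert).** For `r ≥ 2` and all `j, k ∈ {1, …, r}`,
`E[(((r²−1)/4)ρ(j) + ρ(j)³)² ρ(j)²] ≤ 0.00234 r⁸` and
`E[(((r²−1)/4)ρ(j) + ρ(j)³)² ρ(k)²] ≤ 0.00240 r⁸`. -/
theorem rho_cubic_combination_bounds (r : ℕ) (hr : 2 ≤ r) (j k : Fin r) :
    (∫ p, (((r : ℝ) ^ 2 - 1) / 4 * rho1 r j p + (rho1 r j p) ^ 3) ^ 2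
        * (rho1 r j p) ^ 2 ∂(permMeasure r) ≤ 0.00234 * (r : ℝ) ^ 8) ∧
    ∫ p, (((r : ℝ) ^ 2 - 1) / 4 * rho1 r j p + (rho1 r j p) ^ 3) ^ 2
        * (rho1 r k p) ^ 2 ∂(permMeasure r) ≤ 0.00240 * (r : ℝ) ^ 8 := by
  have hR : (2:ℝ) ≤ (r:ℝ) := by exact_mod_cast hr
  have hRpos : (0:ℝ) < (r:ℝ) := by linarith
  have hfact : (0:ℝ) < (r.factorial : ℝ) := by exact_mod_cast r.factorial_pos
  have hs : (0:ℝ) ≤ (r:ℝ) - 2 := by linarith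
  have key1 : ∀ j' : Fin r,
      ∫ p, (((r : ℝ) ^ 2 - 1) / 4 * rho1 r j' p + (rho1 r j' p) ^ 3) ^ 2
        * (rho1 r j' p) ^ 2 ∂(permMeasure r)
      = ((47/20160)*(r:ℝ)^9 - (41/2240)*(r:ℝ)^7 + (19/320)*(r:ℝ)^5 - (1811/20160)*(r:ℝ)^3 + (13/280)*(r:ℝ)) / (r:ℝ) := by
    intro j'
    simp only [GR_integral]
    have h2 : (∑ v : Fin r, ((((r : ℝ) ^ 2 - 1) / 4 * (((v:ℕ):ℝ)+1-((r:ℝ)+1)/2) + (((v:ℕ):ℝ)+1-((r:ℝ)+1)/2) ^ 3) ^ 2) * ((((v:ℕ):ℝ)+1-((r:ℝ)+1)/2) ^ 2)) = (47/20160)*(r:ℝ)^9 - (41/2240)*(r:ℝ)^7 + (19/320)*(r:ℝ)^5 - (1811/20160)*(r:ℝ)^3 + (13/280)*(r:ℝ) := by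
      rw [Fin.sum_univ_eq_sum_range (fun i : ℕ => ((((r : ℝ) ^ 2 - 1) / 4 * (((i:ℕ):ℝ)+1-((r:ℝ)+1)/2) + (((i:ℕ):ℝ)+1-((r:ℝ)+1)/2) ^ 3) ^ 2) * ((((i:ℕ):ℝ)+1-((r:ℝ)+1)/2) ^ 2)) r]
      exact GR_L1 r
    have h1' : (r:ℝ) * (∑ g : Equiv.Perm (Fin r),
        (((r : ℝ) ^ 2 - 1) / 4 * rho1 r j' g + (rho1 r j' g) ^ 3) ^ 2 * (rho1 r j' g) ^ 2)
        = (r.factorial : ℝ) * (∑ v : Fin r, ((((r : ℝ) ^ 2 - 1) / 4 * (((v:ℕ):ℝ)+1-((r:ℝ)+1)/2) + (((v:ℕ):ℝ)+1-((r:ℝ)+1)/2) ^ 3) ^ 2) * ((((v:ℕ):ℝ)+1-((r:ℝ)+1)/2) ^ 2)) :=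
      GR_sum_single j' (fun v : Fin r => ((((r : ℝ) ^ 2 - 1) / 4 * (((v:ℕ):ℝ)+1-((r:ℝ)+1)/2) + (((v:ℕ):ℝ)+1-((r:ℝ)+1)/2) ^ 3) ^ 2) * ((((v:ℕ):ℝ)+1-((r:ℝ)+1)/2) ^ 2))
    rw [h2] at h1'
    rw [show (∑ g : Equiv.Perm (Fin r),
        (((r : ℝ) ^ 2 - 1) / 4 * rho1 r j' g + (rho1 r j' g) ^ 3) ^ 2 * (rho1 r j' g) ^ 2)
        = (r.factorial : ℝ) * ((47/20160)*(r:ℝ)^9 - (41/2240)*(r:ℝ)^7 + (19/320)*(r:ℝ)^5 - (1811/20160)*(r:ℝ)^3 + (13/280)*(r:ℝ)) / (r:ℝ) from by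
      rw [eq_div_iff (ne_of_gt hRpos)]; linarith [h1']]
    rw [mul_div_assoc, inv_mul_cancel_left₀ (ne_of_gt hfact)]
  have bound1 : ((47/20160)*(r:ℝ)^9 - (41/2240)*(r:ℝ)^7 + (19/320)*(r:ℝ)^5 - (1811/20160)*(r:ℝ)^3 + (13/280)*(r:ℝ)) / (r:ℝ) ≤ 0.00234 * (r:ℝ)^8 := by
    rw [div_le_iff₀ hRpos]
    linarith [pow_nonneg hs 2, pow_nonneg hs 3, pow_nonneg hs 4, pow_nonneg hs 5,
      pow_nonneg hs 6, pow_nonneg hs 7, pow_nonneg hs 8, pow_nonneg hs 9, hs]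
  refine ⟨by rw [key1 j]; exact bound1, ?_⟩
  by_cases hjk : j = k
  · subst hjk
    rw [key1 j]
    have h8 : (0:ℝ) ≤ (r:ℝ)^8 := by positivity
    calc ((47/20160)*(r:ℝ)^9 - (41/2240)*(r:ℝ)^7 + (19/320)*(r:ℝ)^5 - (1811/20160)*(r:ℝ)^3 + (13/280)*(r:ℝ)) / (r:ℝ)
        ≤ 0.00234 * (r:ℝ)^8 := bound1
      _ ≤ 0.00240 * (r:ℝ)^8 := by nlinarith
  · have hden : (0:ℝ) < (r:ℝ) * (r:ℝ) - (r:ℝ) := by nlinarith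
    have key2 : ∫ p, (((r : ℝ) ^ 2 - 1) / 4 * rho1 r j p + (rho1 r j p) ^ 3) ^ 2
        * (rho1 r k p) ^ 2 ∂(permMeasure r)
        = (((23/1680)*(r:ℝ)^7 - (7/120)*(r:ℝ)^5 + (7/80)*(r:ℝ)^3 - (3/70)*(r:ℝ)) * ((1/12)*(r:ℝ)^3 - (1/12)*(r:ℝ)) - ((47/20160)*(r:ℝ)^9 - (41/2240)*(r:ℝ)^7 + (19/320)*(r:ℝ)^5 - (1811/20160)*(r:ℝ)^3 + (13/280)*(r:ℝ))) / ((r:ℝ) * (r:ℝ) - (r:ℝ)) := by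
      simp only [GR_integral]
      have hA : (∑ v : Fin r, ((((r : ℝ) ^ 2 - 1) / 4 * (((v:ℕ):ℝ)+1-((r:ℝ)+1)/2) + (((v:ℕ):ℝ)+1-((r:ℝ)+1)/2) ^ 3) ^ 2)) = (23/1680)*(r:ℝ)^7 - (7/120)*(r:ℝ)^5 + (7/80)*(r:ℝ)^3 - (3/70)*(r:ℝ) := by
        rw [Fin.sum_univ_eq_sum_range (fun i : ℕ => ((((r : ℝ) ^ 2 - 1) / 4 * (((i:ℕ):ℝ)+1-((r:ℝ)+1)/2) + (((i:ℕ):ℝ)+1-((r:ℝ)+1)/2) ^ 3) ^ 2)) r]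
        exact GR_L2 r
      have hS : (∑ v : Fin r, ((((v:ℕ):ℝ)+1-((r:ℝ)+1)/2) ^ 2)) = (1/12)*(r:ℝ)^3 - (1/12)*(r:ℝ) := by
        rw [Fin.sum_univ_eq_sum_range (fun i : ℕ => ((((i:ℕ):ℝ)+1-((r:ℝ)+1)/2) ^ 2)) r]
        exact GR_L3 r
      have hAS : (∑ v : Fin r, ((((r : ℝ) ^ 2 - 1) / 4 * (((v:ℕ):ℝ)+1-((r:ℝ)+1)/2) + (((v:ℕ):ℝ)+1-((r:ℝ)+1)/2) ^ 3) ^ 2) * ((((v:ℕ):ℝ)+1-((r:ℝ)+1)/2) ^ 2)) = (47/20160)*(r:ℝ)^9 - (41/2240)*(r:ℝ)^7 + (19/320)*(r:ℝ)^5 - (1811/20160)*(r:ℝ)^3 + (13/280)*(r:ℝ) := by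
        rw [Fin.sum_univ_eq_sum_range (fun i : ℕ => ((((r : ℝ) ^ 2 - 1) / 4 * (((i:ℕ):ℝ)+1-((r:ℝ)+1)/2) + (((i:ℕ):ℝ)+1-((r:ℝ)+1)/2) ^ 3) ^ 2) * ((((i:ℕ):ℝ)+1-((r:ℝ)+1)/2) ^ 2)) r]
        exact GR_L1 r
      have hoff : (∑ p ∈ (Finset.univ : Finset (Fin r)).offDiag, ((((r : ℝ) ^ 2 - 1) / 4 * (((p.1:ℕ):ℝ)+1-((r:ℝ)+1)/2) + (((p.1:ℕ):ℝ)+1-((r:ℝ)+1)/2) ^ 3) ^ 2) * ((((p.2:ℕ):ℝ)+1-((r:ℝ)+1)/2) ^ 2))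
          = (∑ v : Fin r, ((((r : ℝ) ^ 2 - 1) / 4 * (((v:ℕ):ℝ)+1-((r:ℝ)+1)/2) + (((v:ℕ):ℝ)+1-((r:ℝ)+1)/2) ^ 3) ^ 2)) * (∑ v : Fin r, ((((v:ℕ):ℝ)+1-((r:ℝ)+1)/2) ^ 2))
            - ∑ v : Fin r, ((((r : ℝ) ^ 2 - 1) / 4 * (((v:ℕ):ℝ)+1-((r:ℝ)+1)/2) + (((v:ℕ):ℝ)+1-((r:ℝ)+1)/2) ^ 3) ^ 2) * ((((v:ℕ):ℝ)+1-((r:ℝ)+1)/2) ^ 2) :=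
        GR_offDiag_split (fun v : Fin r => ((((r : ℝ) ^ 2 - 1) / 4 * (((v:ℕ):ℝ)+1-((r:ℝ)+1)/2) + (((v:ℕ):ℝ)+1-((r:ℝ)+1)/2) ^ 3) ^ 2)) (fun v : Fin r => ((((v:ℕ):ℝ)+1-((r:ℝ)+1)/2) ^ 2))
      rw [hA, hS, hAS] at hoff
      have h1' : ((r:ℝ) * (r:ℝ) - (r:ℝ)) * (∑ g : Equiv.Perm (Fin r),
          (((r : ℝ) ^ 2 - 1) / 4 * rho1 r j g + (rho1 r j g) ^ 3) ^ 2 * (rho1 r k g) ^ 2)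
          = (r.factorial : ℝ) * (∑ p ∈ (Finset.univ : Finset (Fin r)).offDiag,
              ((((r : ℝ) ^ 2 - 1) / 4 * (((p.1:ℕ):ℝ)+1-((r:ℝ)+1)/2) + (((p.1:ℕ):ℝ)+1-((r:ℝ)+1)/2) ^ 3) ^ 2) * ((((p.2:ℕ):ℝ)+1-((r:ℝ)+1)/2) ^ 2)) :=
        GR_sum_pair j k hjk (fun v w : Fin r => ((((r : ℝ) ^ 2 - 1) / 4 * (((v:ℕ):ℝ)+1-((r:ℝ)+1)/2) + (((v:ℕ):ℝ)+1-((r:ℝ)+1)/2) ^ 3) ^ 2) * ((((w:ℕ):ℝ)+1-((r:ℝ)+1)/2) ^ 2))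
      rw [hoff] at h1'
      rw [show (∑ g : Equiv.Perm (Fin r),
          (((r : ℝ) ^ 2 - 1) / 4 * rho1 r j g + (rho1 r j g) ^ 3) ^ 2 * (rho1 r k g) ^ 2)
          = (r.factorial : ℝ) * ((((23/1680)*(r:ℝ)^7 - (7/120)*(r:ℝ)^5 + (7/80)*(r:ℝ)^3 - (3/70)*(r:ℝ)) * ((1/12)*(r:ℝ)^3 - (1/12)*(r:ℝ)) - ((47/20160)*(r:ℝ)^9 - (41/2240)*(r:ℝ)^7 + (19/320)*(r:ℝ)^5 - (1811/20160)*(r:ℝ)^3 + (13/280)*(r:ℝ)))) / ((r:ℝ) * (r:ℝ) - (r:ℝ)) from by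
        rw [eq_div_iff (ne_of_gt hden)]; linarith [h1']]
      rw [mul_div_assoc, inv_mul_cancel_left₀ (ne_of_gt hfact)]
    rw [key2, div_le_iff₀ hden]
    linarith [pow_nonneg hs 2, pow_nonneg hs 3, pow_nonneg hs 4, pow_nonneg hs 5,
      pow_nonneg hs 6, pow_nonneg hs 7, pow_nonneg hs 8, pow_nonneg hs 9,
      pow_nonneg hs 10, hs]
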